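/- Let G ∈ F^{k×n} generate an (r,r,d)-robust batch code, let i ∈ [k], and let S_i = { j : G_{i,j} ≠ 0 }. Then the matrix G' obtained from G by deleting row i and all columns in S_i generates an (r,r,d)-robust batch code with message length k−1 and block length n − |S_i| (assuming r ≤ k − 1). -/
import Mathlib


/-- A matrix `G : ι × κ → F` generates an `(r,r,d)`-robust batch code: for every
request set `I` of size `r` and erasure set `D` of size `d`, there is a query set `J`
of size at most `r`, disjoint from `D`, such that `(xG)|_J` determines `x|_I`. -/
def IsRBC {ι κ : Type} [Fintype ι] [Fintype κ] [DecidableEq ι] [DecidableEq κ]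
    (F : Type) [Field F] (r d : ℕ) (G : Matrix ι κ F) : Prop :=
  ∀ I : Finset ι, I.card = r → ∀ D : Finset κ, D.card = d →
    ∃ J : Finset κ, J.card ≤ r ∧ Disjoint J D ∧
      ∀ x y : ι → F, (∀ j ∈ J, Matrix.vecMul x G j = Matrix.vecMul y G j) →
        ∀ i ∈ I, x i = y i

open Classical in
theorem stmt_7 {F : Type} [Field F] [Fintype F] {k n r d : ℕ}
    (hr : 1 ≤ r) (hrk : r ≤ k - 1) (hk : 1 ≤ k)
    (G : Matrix (Fin k) (Fin n) F) (hG : IsRBC F r d G) (i : Fin k) :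
    IsRBC F r d
      (G.submatrix (fun i' : {a : Fin k // a ≠ i} => i'.1)
        (fun j : {b : Fin n // G i b = 0} => j.1)) := by
  intro I' hI' D' hD'
  set I : Finset (Fin k) := I'.map (Function.Embedding.subtype _) with hIdef
  set D : Finset (Fin n) := D'.map (Function.Embedding.subtype _) with hDdef
  obtain ⟨J, hJcard, hJD, hJrec⟩ := hG I (by simp [hIdef, hI']) D (by simp [hDdef, hD'])
  have hrk' : r ≤ k := le_trans hrk (Nat.sub_le k 1)
  -- key: every column in J has 0 in row i
  have key : ∀ j ∈ J, G i j = 0 := by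
    set A : (Fin k → F) →ₗ[F] ({j // j ∈ J} → F) :=
      (LinearMap.funLeft F F (Subtype.val : {j // j ∈ J} → Fin n)).comp
        (Matrix.vecMulLinear G) with hA
    set ρ : (Fin k → F) →ₗ[F] ({a // a ∈ I} → F) :=
      LinearMap.funLeft F F (Subtype.val : {a // a ∈ I} → Fin k) with hρ
    have hker : LinearMap.ker A ≤ LinearMap.ker ρ := by
      intro x hx
      have hx' : ∀ j ∈ J, Matrix.vecMul x G j = Matrix.vecMul (0 : Fin k → F) G j := by
        intro j hj
        have h0 : A x = 0 := hx
        have := congrFun h0 ⟨j, hj⟩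
        simpa [hA, Matrix.zero_vecMul] using this
      have := hJrec x 0 hx'
      ext a
      simpa [hρ] using this a.1 a.2
    have hρsurj : Function.Surjective ρ :=
      LinearMap.funLeft_surjective_of_injective F F _ Subtype.val_injective
    have hrkρ : Module.finrank F (LinearMap.ker ρ) = k - r := by
      have h1 := LinearMap.finrank_range_add_finrank_ker ρ
      have h2 : LinearMap.range ρ = ⊤ := LinearMap.range_eq_top.mpr hρsurj
      rw [h2] at h1
      have h3 : Module.finrank F (⊤ : Submodule F ({a // a ∈ I} → F)) = r := by
        rw [finrank_top, Module.finrank_fintype_fun_eq_card, Fintype.card_coe, hIdef]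
        simp [hI']
      rw [h3, Module.finrank_fintype_fun_eq_card, Fintype.card_fin] at h1
      omega
    have hrkA : k - r ≤ Module.finrank F (LinearMap.ker A) := by
      have h1 := LinearMap.finrank_range_add_finrank_ker A
      have h2 : Module.finrank F (LinearMap.range A) ≤ J.card := by
        have := Submodule.finrank_le (LinearMap.range A)
        rwa [Module.finrank_fintype_fun_eq_card, Fintype.card_coe] at this
      rw [Module.finrank_fintype_fun_eq_card, Fintype.card_fin] at h1
      omega
    have heq : LinearMap.ker A = LinearMap.ker ρ :=
      Submodule.eq_of_le_of_finrank_le hker (hrkρ ▸ hrkA)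
    have hei : (Pi.single i 1 : Fin k → F) ∈ LinearMap.ker ρ := by
      rw [LinearMap.mem_ker]
      ext a
      have hai : a.1 ≠ i := by
        obtain ⟨a, ha⟩ := a
        simp only [hIdef, Finset.mem_map, Function.Embedding.coe_subtype] at ha
        obtain ⟨a', _, rfl⟩ := ha
        exact a'.2
      simp [hρ, Pi.single_eq_of_ne hai]
    rw [← heq, LinearMap.mem_ker] at hei
    intro j hj
    have := congrFun hei ⟨j, hj⟩
    simpa [hA, Matrix.single_vecMul] using this
  -- build J'
  refine ⟨J.subtype (fun b => G i b = 0), ?_, ?_, ?_⟩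
  · calc (J.subtype _).card = (J.filter _).card := Finset.card_subtype _ _
      _ ≤ J.card := Finset.card_filter_le _ _
      _ ≤ r := hJcard
  · rw [Finset.disjoint_left]
    rintro ⟨b, hb⟩ hbJ hbD
    rw [Finset.mem_subtype] at hbJ
    have hbD' : b ∈ D := by
      simp only [hDdef, Finset.mem_map, Function.Embedding.coe_subtype]
      exact ⟨⟨b, hb⟩, hbD, rfl⟩
    exact Finset.disjoint_left.mp hJD hbJ hbD'
  · intro x' y' hagree a' ha'
    have hvm : ∀ (z' : {a : Fin k // a ≠ i} → F) (j : Fin n) (hj0 : G i j = 0),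
        Matrix.vecMul (fun a => if h : a = i then 0 else z' ⟨a, h⟩) G j =
        Matrix.vecMul z' (G.submatrix (fun i' : {a : Fin k // a ≠ i} => i'.1)
          (fun j : {b : Fin n // G i b = 0} => j.1)) ⟨j, hj0⟩ := by
      intro z' j hj0
      simp only [Matrix.vecMul, dotProduct, Matrix.submatrix_apply]
      rw [← Finset.sum_erase_add _ _ (Finset.mem_univ i)]
      rw [Finset.sum_subtype (p := fun a : Fin k => a ≠ i) (Finset.univ.erase i)
        (fun a => by simp [Finset.mem_erase]) _]
      · simp
        exact Finset.sum_congr rfl fun x _ => if_neg x.2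
      · infer_instance
    have hxy : ∀ j ∈ J,
        Matrix.vecMul (fun a => if h : a = i then 0 else x' ⟨a, h⟩) G j =
        Matrix.vecMul (fun a => if h : a = i then 0 else y' ⟨a, h⟩) G j := by
      intro j hj
      have hj0 := key j hj
      rw [hvm x' j hj0, hvm y' j hj0]
      exact hagree ⟨j, hj0⟩ (Finset.mem_subtype.mpr hj)
    have := hJrec _ _ hxy a'.1 (by
      simp only [hIdef, Finset.mem_map, Function.Embedding.coe_subtype]
      exact ⟨a', ha', rfl⟩)
    simpa [dif_neg a'.2] using this
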